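/- Let (a/c, b/c) and (a'/c', b'/c') be two distinct rational points of 𝐒¹_I = {(x₁,x₂) ∈ ℝ² : x₁²+x₂² = 1}, where a, b, c and a', b', c' are integers with a² + b² = c², a'² + b'² = c'², gcd(a,b,c) = 1, gcd(a',b',c') = 1, and c, c' ≥ 1. Define the horocycle at (a/c,b/c) to be the circle of radius ρ = 1/(1 + √2·c) centered at (1 − ρ)·(a/c, b/c) (internally tangent to 𝐒¹_I at (a/c,b/c)), and similarly with primes. Then the Euclidean distance between the two centers is at least the sum ρ + ρ' of the two radii (the horocycles are tangent or disjoint), with equality (tangency) if and only if aa' + bb' − cc' = −1. -/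

import Mathlib

set_option maxHeartbeats 1000000

/-- Horocycle tangency on `𝐒¹_I`.  Let `(a/c, b/c)` and `(a'/c', b'/c')` be two distinct
rational points of the unit circle (`a²+b²=c²`, `gcd(a,b,c)=1`, `c ≥ 1`, and similarly
with primes).  The horocycle at `(a/c, b/c)` has radius `ρ = 1/(1+√2·c)` and center
`(1−ρ)·(a/c, b/c)`.  Then the distance between the two centers is at least `ρ + ρ'`,
with equality (tangency) if and only if `aa' + bb' − cc' = −1`. -/
theorem horocycles_S1I (a b c a' b' c' : ℤ) (hc : 1 ≤ c) (hc' : 1 ≤ c')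
    (hpyth : a ^ 2 + b ^ 2 = c ^ 2) (hpyth' : a' ^ 2 + b' ^ 2 = c' ^ 2)
    (hgcd : Int.gcd (Int.gcd a b) c = 1) (hgcd' : Int.gcd (Int.gcd a' b') c' = 1)
    (z z' : EuclideanSpace ℝ (Fin 2))
    (hz0 : z 0 = (a : ℝ) / c) (hz1 : z 1 = (b : ℝ) / c)
    (hz0' : z' 0 = (a' : ℝ) / c') (hz1' : z' 1 = (b' : ℝ) / c')
    (hne : z ≠ z')
    (ρ ρ' : ℝ) (hρ : ρ = 1 / (1 + Real.sqrt 2 * c)) (hρ' : ρ' = 1 / (1 + Real.sqrt 2 * c')) :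
    ρ + ρ' ≤ dist ((1 - ρ) • z) ((1 - ρ') • z') ∧
    (dist ((1 - ρ) • z) ((1 - ρ') • z') = ρ + ρ' ↔ a * a' + b * b' - c * c' = -1) := by
  have hs2 : (0:ℝ) < Real.sqrt 2 := by positivity
  have hs : Real.sqrt 2 ^ 2 = 2 := Real.sq_sqrt (by norm_num)
  have hcR : (0:ℝ) < (c:ℝ) := by exact_mod_cast hc
  have hcR' : (0:ℝ) < (c':ℝ) := by exact_mod_cast hc'
  have hden : (0:ℝ) < 1 + Real.sqrt 2 * c := by positivity
  have hden' : (0:ℝ) < 1 + Real.sqrt 2 * c' := by positivity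
  have hρpos : 0 < ρ := by rw [hρ]; positivity
  have hρ'pos : 0 < ρ' := by rw [hρ']; positivity
  -- key reformulation of ρ
  have h1ρ : 1 - ρ = Real.sqrt 2 * c * ρ := by
    rw [hρ]; field_simp; ring
  have h1ρ' : 1 - ρ' = Real.sqrt 2 * c' * ρ' := by
    rw [hρ']; field_simp; ring
  -- Cauchy-Schwarz: a*a' + b*b' ≤ c*c'
  have hk : a * a' + b * b' ≤ c * c' := by
    nlinarith [sq_nonneg (a*b' - b*a'), sq_nonneg (a*a' + b*b' - c*c'),
      mul_pos (show (0:ℤ) < c from hc) (show (0:ℤ) < c' from hc'),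
      sq_nonneg (a*a' + b*b' + c*c')]
  have hlt : a * a' + b * b' < c * c' := by
    rcases lt_or_eq_of_le hk with h | heq
    · exact h
    · exfalso; apply hne
      have h0 : (a*c' - a'*c)^2 + (b*c' - b'*c)^2 = 0 := by
        linear_combination c'^2 * hpyth + c^2 * hpyth' - 2*c*c'*heq
      have hA : a * c' = a' * c := by nlinarith [sq_nonneg (a*c' - a'*c), sq_nonneg (b*c' - b'*c)]
      have hB : b * c' = b' * c := by nlinarith [sq_nonneg (a*c' - a'*c), sq_nonneg (b*c' - b'*c)]
      ext i
      fin_cases i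
      · show z 0 = z' 0
        rw [hz0, hz0', div_eq_div_iff hcR.ne' hcR'.ne']
        exact_mod_cast hA
      · show z 1 = z' 1
        rw [hz1, hz1', div_eq_div_iff hcR.ne' hcR'.ne']
        exact_mod_cast hB
  set D := dist ((1 - ρ) • z) ((1 - ρ') • z') with hDdef
  have hDnn : 0 ≤ D := dist_nonneg
  -- coordinates of the centers
  have hX0 : ((1 - ρ) • z) 0 = Real.sqrt 2 * (ρ * a) := by
    simp only [PiLp.smul_apply, smul_eq_mul, hz0, h1ρ]
    field_simp
  have hX1 : ((1 - ρ) • z) 1 = Real.sqrt 2 * (ρ * b) := by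
    simp only [PiLp.smul_apply, smul_eq_mul, hz1, h1ρ]
    field_simp
  have hY0 : ((1 - ρ') • z') 0 = Real.sqrt 2 * (ρ' * a') := by
    simp only [PiLp.smul_apply, smul_eq_mul, hz0', h1ρ']
    field_simp
  have hY1 : ((1 - ρ') • z') 1 = Real.sqrt 2 * (ρ' * b') := by
    simp only [PiLp.smul_apply, smul_eq_mul, hz1', h1ρ']
    field_simp
  have hD2 : D ^ 2 = (ρ + ρ') ^ 2 + 4 * ρ * ρ' * ((c:ℝ) * c' - (a * a' + b * b') - 1) := by
    have : D ^ 2 = (((1 - ρ) • z) 0 - ((1 - ρ') • z') 0)^2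
        + (((1 - ρ) • z) 1 - ((1 - ρ') • z') 1)^2 := by
      rw [hDdef, EuclideanSpace.dist_eq, Fin.sum_univ_two,
        Real.sq_sqrt (by positivity)]
      simp [Real.dist_eq, sq_abs]
    rw [this, hX0, hX1, hY0, hY1]
    have hc2 : 2 * (c:ℝ)^2 * ρ^2 = (1 - ρ)^2 := by
      linear_combination (-(1:ℝ) + ρ - Real.sqrt 2*c*ρ) * h1ρ - (c*ρ)^2 * hs
    have hc2' : 2 * (c':ℝ)^2 * ρ'^2 = (1 - ρ')^2 := by
      linear_combination (-(1:ℝ) + ρ' - Real.sqrt 2*c'*ρ') * h1ρ' - (c'*ρ')^2 * hs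
    have hcc : 4 * (c:ℝ) * c' * (ρ * ρ') = 2 * (1 - ρ) * (1 - ρ') := by
      linear_combination (-2*(1 - ρ)) * h1ρ' - 2*Real.sqrt 2*c'*ρ'*h1ρ - 2*c*c'*ρ*ρ'*hs
    have hpR : (a:ℝ)^2 + (b:ℝ)^2 = (c:ℝ)^2 := by exact_mod_cast hpyth
    have hpR' : (a':ℝ)^2 + (b':ℝ)^2 = (c':ℝ)^2 := by exact_mod_cast hpyth'
    linear_combination 2*ρ^2*hpR + 2*ρ'^2*hpR' + hc2 + hc2' - hcc + (ρ*a - ρ'*a')^2 * hs + (ρ*b - ρ'*b')^2 * hs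
  have hKnn : (1:ℝ) ≤ (c:ℝ) * c' - ((a:ℝ) * a' + (b:ℝ) * b') := by
    have : a * a' + b * b' + 1 ≤ c * c' := hlt
    have : ((a * a' + b * b' + 1 : ℤ) : ℝ) ≤ ((c * c' : ℤ) : ℝ) := Int.cast_le.2 this
    push_cast at this
    linarith
  have hmain : ρ + ρ' ≤ D := by
    nlinarith [mul_pos hρpos hρ'pos, sq_nonneg (D - (ρ + ρ'))]
  refine ⟨hmain, ?_, ?_⟩
  · intro hEq
    have h40 : 4 * ρ * ρ' * ((c:ℝ) * c' - ((a:ℝ) * a' + (b:ℝ) * b') - 1) = 0 := by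
      nlinarith [hD2]
    have hK0 : (c:ℝ) * c' - ((a:ℝ) * a' + (b:ℝ) * b') - 1 = 0 := by
      have h4 : (0:ℝ) < 4 * ρ * ρ' := by positivity
      rcases mul_eq_zero.1 h40 with h | h
      · exact absurd h (by positivity)
      · exact h
    have : ((a * a' + b * b' - c * c' : ℤ) : ℝ) = -1 := by push_cast; linarith
    exact_mod_cast this
  · intro hEq
    have hK0 : (c:ℝ) * c' - ((a:ℝ) * a' + (b:ℝ) * b') - 1 = 0 := by
      have : ((a * a' + b * b' - c * c' : ℤ) : ℝ) = -1 := by exact_mod_cast hEq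
      push_cast at this
      linarith
    have : D ^ 2 = (ρ + ρ') ^ 2 := by rw [hD2, hK0]; ring
    nlinarith [hmain]
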